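/- There exist absolute constants C, C' > 0 such that the following holds. Let X be a countable data domain and A : X^n → Y an (ε,δ)-differentially private algorithm with ε ∈ (0, 1/2] and δ ∈ (0, ε). Then for β = e^{−ε²n} + C'·n·√(δ/ε), the β-approximate max-information of A over product distributions satisfies I^β_{∞,P}(A, n) ≤ C·( ε²·n + n·√(δ/ε) ). -/

import Mathlib

open scoped ENNReal

/-- The probability that a sample from the probability mass function `μ` lands in `S`. -/
noncomputable def prob {α : Type*} (μ : PMF α) (S : Set α) : ℝ :=
  (μ.toOuterMeasure S).toReal

/-- The independent coupling of two distributions: a pair whose components are independent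
with the given marginal distributions. -/
noncomputable def indepPair {α β : Type*} (p : PMF α) (q : PMF β) : PMF (α × β) :=
  p.bind fun a => q.map fun b => (a, b)

/-- `MaxInfoLe μ b k` : the `b`-approximate max-information of the joint distribution `μ`
is at most `k` (measured in bits):  for every event `O` with `Pr[(X,Z) ∈ O] > b`,
`Pr[(X,Z) ∈ O] - b ≤ 2^k · Pr[X ⊗ Z ∈ O]`. -/
def MaxInfoLe {α β : Type*} (μ : PMF (α × β)) (b k : ℝ) : Prop :=
  ∀ O : Set (α × β), b < prob μ O →
    prob μ O - b ≤ 2 ^ k * prob (indepPair (μ.map Prod.fst) (μ.map Prod.snd)) O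

/-- The `n`-fold product (i.i.d.) distribution `P^n` on datasets of size `n`. -/
noncomputable def iidPMF {X : Type*} (P : PMF X) : (n : ℕ) → PMF (Fin n → X)
  | 0 => PMF.pure (fun i => i.elim0)
  | n + 1 => P.bind fun a => (iidPMF P n).map fun x => Fin.cons a x

/-- The joint distribution of `(X, A(X))` where `X ∼ μ` and `A` is a randomized algorithm. -/
noncomputable def jointPMF {D Y : Type*} (μ : PMF D) (A : D → PMF Y) : PMF (D × Y) :=
  μ.bind fun x => (A x).map fun y => (x, y)
/-- Two datasets are neighboring if they differ in at most one entry. -/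
def Neighbor {X : Type*} {n : ℕ} (x x' : Fin n → X) : Prop :=
  ∃ i : Fin n, ∀ j : Fin n, j ≠ i → x j = x' j

/-- `(ε,δ)`-differential privacy of a randomized algorithm `A` on datasets of size `n`. -/
def DiffPrivate {X Y : Type*} {n : ℕ} (A : (Fin n → X) → PMF Y) (ε δ : ℝ) : Prop :=
  ∀ x x' : Fin n → X, Neighbor x x' → ∀ O : Set Y,
    prob (A x) O ≤ Real.exp ε * prob (A x') O + δ

namespace Stmt5Aux
open Classical ENNReal Real

variable {X Y : Type}

/-- measure of a set under a PMF, in `ℝ≥0∞`. -/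
noncomputable abbrev pm {α : Type*} (μ : PMF α) (S : Set α) : ℝ≥0∞ := μ.toOuterMeasure S

lemma pm_le_one {α : Type*} (μ : PMF α) (S : Set α) : pm μ S ≤ 1 := by
  show μ.toOuterMeasure S ≤ 1
  rw [PMF.toOuterMeasure_apply]
  calc ∑' x, S.indicator (⇑μ) x ≤ ∑' x, μ x :=
        ENNReal.tsum_le_tsum (fun x => Set.indicator_le_self _ _ x)
    _ = 1 := μ.tsum_coe

lemma pm_ne_top {α : Type*} (μ : PMF α) (S : Set α) : pm μ S ≠ ⊤ :=
  ne_top_of_le_ne_top one_ne_top (pm_le_one μ S)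

lemma prob_nonneg {α : Type*} (μ : PMF α) (S : Set α) : 0 ≤ prob μ S := ENNReal.toReal_nonneg

/-- `sub B a` : the algorithm on `n` inputs obtained by fixing the first input to `a`. -/
noncomputable def sub {n : ℕ} (B : (Fin (n+1) → X) → PMF Y) (a : X) : (Fin n → X) → PMF Y :=
  fun t => B (Fin.cons a t)

/-- marginal output distribution -/
noncomputable def marg (P : PMF X) {n : ℕ} (B : (Fin n → X) → PMF Y) : PMF Y :=
  (iidPMF P n).bind B

/-- ENNReal form of differential privacy. -/
def DPE {n : ℕ} (B : (Fin n → X) → PMF Y) (ε δ : ℝ) : Prop :=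
  ∀ x x' : Fin n → X, Neighbor x x' → ∀ S : Set Y,
    pm (B x) S ≤ ENNReal.ofReal (Real.exp ε) * pm (B x') S + ENNReal.ofReal δ

lemma dpe_of_dp {n : ℕ} {A : (Fin n → X) → PMF Y} {ε δ : ℝ} (hδ : 0 ≤ δ)
    (h : DiffPrivate A ε δ) : DPE A ε δ := by
  intro x x' hn S
  have hr := h x x' hn S
  have h1 : pm (A x) S = ENNReal.ofReal (prob (A x) S) := by
    rw [prob, ENNReal.ofReal_toReal (pm_ne_top _ _)]
  rw [h1]
  calc ENNReal.ofReal (prob (A x) S) ≤ ENNReal.ofReal (Real.exp ε * prob (A x') S + δ) :=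
        ENNReal.ofReal_le_ofReal hr
    _ ≤ ENNReal.ofReal (Real.exp ε * prob (A x') S) + ENNReal.ofReal δ := ENNReal.ofReal_add_le
    _ = ENNReal.ofReal (Real.exp ε) * ENNReal.ofReal (prob (A x') S) + ENNReal.ofReal δ := by
        rw [ENNReal.ofReal_mul (Real.exp_nonneg _)]
    _ = ENNReal.ofReal (Real.exp ε) * pm (A x') S + ENNReal.ofReal δ := by
        rw [prob, ENNReal.ofReal_toReal (pm_ne_top _ _)]

lemma neighbor_cons {n : ℕ} (a a' : X) (t : Fin n → X) :
    Neighbor (Fin.cons a t) (Fin.cons a' t) := by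
  refine ⟨0, fun j hj => ?_⟩
  rcases Fin.eq_zero_or_eq_succ j with h | ⟨k, rfl⟩
  · exact absurd h hj
  · simp [Fin.cons_succ]

lemma neighbor_cons_same {n : ℕ} (a : X) {t t' : Fin n → X} (h : Neighbor t t') :
    Neighbor (Fin.cons a t) (Fin.cons a t') := by
  obtain ⟨i, hi⟩ := h
  refine ⟨i.succ, fun j hj => ?_⟩
  rcases Fin.eq_zero_or_eq_succ j with h | ⟨k, rfl⟩
  · subst h; simp
  · have : k ≠ i := fun h => hj (by rw [h])
    simp [Fin.cons_succ, hi k this]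

lemma dpe_sub {n : ℕ} {B : (Fin (n+1) → X) → PMF Y} {ε δ : ℝ} (h : DPE B ε δ) (a : X) :
    DPE (sub B a) ε δ := fun t t' hn S => h _ _ (neighbor_cons_same a hn) S

lemma iid_cons (P : PMF X) {n : ℕ} (a : X) (t : Fin n → X) :
    iidPMF P (n+1) ((Fin.cons a t : Fin (n+1) → X)) = P a * iidPMF P n t := by
  rw [iidPMF, PMF.bind_apply]
  rw [ENNReal.tsum_eq_add_tsum_ite a]
  have h1 : (PMF.map (fun x : Fin n → X => (Fin.cons a x : Fin (n+1) → X)) (iidPMF P n)) ((Fin.cons a t : Fin (n+1) → X)) = iidPMF P n t := by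
    rw [PMF.map_apply]
    rw [ENNReal.tsum_eq_add_tsum_ite t]
    refine Eq.trans ?_ (add_zero ((iidPMF P n) t))
    congr 1
    · exact if_pos rfl
    · exact ENNReal.tsum_eq_zero.mpr fun t' => by
        split_ifs with h1 h2
        · rfl
        · exact absurd (Fin.cons_inj.mp h2).2.symm h1
        · rfl
  refine Eq.trans ?_ (add_zero (P a * (iidPMF P n) t))
  congr 1
  · rw [h1]
  · exact ENNReal.tsum_eq_zero.mpr fun a' => by
      split_ifs with h
      · rfl
      · rw [PMF.map_apply]
        convert mul_zero (P a')
        exact ENNReal.tsum_eq_zero.mpr fun t' => by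
          split_ifs with hc
          · exact absurd (Fin.cons_inj.mp hc).1.symm h
          · rfl

/-- splitting a tsum over `Fin (n+1) → X` -/
lemma tsum_cons {n : ℕ} (f : (Fin (n+1) → X) → ℝ≥0∞) :
    ∑' x, f x = ∑' (a : X), ∑' (t : Fin n → X), f (Fin.cons a t) := by
  rw [← ENNReal.tsum_prod]
  exact (Equiv.tsum_eq (Fin.consEquiv (fun _ => X)) f).symm ▸ rfl


section Chunk2
variable (P : PMF X) {ε δ : ℝ}

lemma marg_apply {n : ℕ} (B : (Fin n → X) → PMF Y) (y : Y) :
    marg P B y = ∑' t, iidPMF P n t * (B t) y := PMF.bind_apply _ _ _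

lemma marg_val {n : ℕ} (B : (Fin (n+1) → X) → PMF Y) (y : Y) :
    marg P B y = ∑' a, P a * marg P (sub B a) y := by
  rw [marg_apply, tsum_cons]
  refine tsum_congr fun a => ?_
  rw [marg_apply, ← ENNReal.tsum_mul_left]
  refine tsum_congr fun t => ?_
  rw [iid_cons, sub, mul_assoc]

lemma marg_pm {n : ℕ} (B : (Fin n → X) → PMF Y) (S : Set Y) :
    pm (marg P B) S = ∑' t, iidPMF P n t * pm (B t) S :=
  PMF.toOuterMeasure_bind_apply _ _ _

lemma marg_pm_succ {n : ℕ} (B : (Fin (n+1) → X) → PMF Y) (S : Set Y) :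
    pm (marg P B) S = ∑' a, P a * pm (marg P (sub B a)) S := by
  rw [marg_pm, tsum_cons]
  refine tsum_congr fun a => ?_
  rw [marg_pm, ← ENNReal.tsum_mul_left]
  refine tsum_congr fun t => ?_
  rw [iid_cons, sub, mul_assoc]

lemma weighted_le {c d : ℝ≥0∞} {p : PMF X} (f : X → ℝ≥0∞)
    (h : ∀ a, f a ≤ c + d) : ∑' a, p a * f a ≤ c + d := by
  calc ∑' a, p a * f a ≤ ∑' a, p a * (c + d) :=
        ENNReal.tsum_le_tsum fun a => mul_le_mul_right (h a) _
    _ = (∑' a, p a) * (c + d) := ENNReal.tsum_mul_right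
    _ = c + d := by rw [p.tsum_coe, one_mul]

lemma marg_dp {n : ℕ} {B : (Fin (n+1) → X) → PMF Y} (h : DPE B ε δ) (a a' : X) (S : Set Y) :
    pm (marg P (sub B a)) S ≤
      ENNReal.ofReal (Real.exp ε) * pm (marg P (sub B a')) S + ENNReal.ofReal δ := by
  rw [marg_pm, marg_pm]
  calc ∑' t, iidPMF P n t * pm (sub B a t) S
      ≤ ∑' t, iidPMF P n t * (ENNReal.ofReal (Real.exp ε) * pm (sub B a' t) S
          + ENNReal.ofReal δ) :=
        ENNReal.tsum_le_tsum fun t =>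
          mul_le_mul_right (h _ _ (neighbor_cons a a' t) S) _
    _ = ∑' t, (iidPMF P n t * (ENNReal.ofReal (Real.exp ε) * pm (sub B a' t) S)
          + iidPMF P n t * ENNReal.ofReal δ) := by
        refine tsum_congr fun t => ?_; rw [mul_add]
    _ = ENNReal.ofReal (Real.exp ε) * ∑' t, iidPMF P n t * pm (sub B a' t) S
          + (∑' t, iidPMF P n t) * ENNReal.ofReal δ := by
        rw [ENNReal.tsum_add, ENNReal.tsum_mul_right, ← ENNReal.tsum_mul_left]
        congr 1
        refine tsum_congr fun t => ?_
        ring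
    _ = _ := by rw [PMF.tsum_coe, one_mul]

lemma marg_dp_mix₁ {n : ℕ} {B : (Fin (n+1) → X) → PMF Y} (h : DPE B ε δ) (a : X) (S : Set Y) :
    pm (marg P (sub B a)) S ≤
      ENNReal.ofReal (Real.exp ε) * pm (marg P B) S + ENNReal.ofReal δ := by
  rw [marg_pm_succ]
  have : pm (marg P (sub B a)) S = ∑' a', P a' * pm (marg P (sub B a)) S := by
    rw [ENNReal.tsum_mul_right, PMF.tsum_coe, one_mul]
  rw [this]
  calc ∑' a', P a' * pm (marg P (sub B a)) S
      ≤ ∑' a', P a' * (ENNReal.ofReal (Real.exp ε) * pm (marg P (sub B a')) S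
          + ENNReal.ofReal δ) :=
        ENNReal.tsum_le_tsum fun a' => mul_le_mul_right (marg_dp P h a a' S) _
    _ = ENNReal.ofReal (Real.exp ε) * ∑' a', P a' * pm (marg P (sub B a')) S
          + (∑' a', P a') * ENNReal.ofReal δ := by
        rw [← ENNReal.tsum_mul_right, ← ENNReal.tsum_mul_left, ← ENNReal.tsum_add]
        refine tsum_congr fun a' => ?_
        ring
    _ = _ := by rw [PMF.tsum_coe, one_mul]

lemma marg_dp_mix₂ {n : ℕ} {B : (Fin (n+1) → X) → PMF Y} (h : DPE B ε δ) (a : X) (S : Set Y) :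
    pm (marg P B) S ≤
      ENNReal.ofReal (Real.exp ε) * pm (marg P (sub B a)) S + ENNReal.ofReal δ := by
  rw [marg_pm_succ]
  exact weighted_le _ fun a' => marg_dp P h a' a S

end Chunk2

section RealFacts

lemma exp_half_lt_two : Real.exp (1/2) < 2 := by
  nlinarith [Real.exp_one_lt_d9, Real.exp_pos (1/2), Real.exp_add (1/2) (1/2),
    Real.exp_pos 1]

lemma half_le_one_sub_exp {ε : ℝ} (hε : 0 < ε) (hε2 : ε ≤ 1/2) :
    ε/2 ≤ 1 - Real.exp (-ε) := by
  have h1 : ε * Real.exp (-ε) ≤ 1 - Real.exp (-ε) := by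
    have := Real.add_one_le_exp ε
    have hpos := Real.exp_pos (-ε)
    have : (ε + 1) * Real.exp (-ε) ≤ Real.exp ε * Real.exp (-ε) := by
      apply mul_le_mul_of_nonneg_right this hpos.le
    rw [← Real.exp_add] at this
    simp at this
    nlinarith
  have h2 : (1:ℝ)/2 ≤ Real.exp (-ε) := by
    have hm : Real.exp (-(1/2)) ≤ Real.exp (-ε) := Real.exp_le_exp.mpr (by linarith)
    have heq : Real.exp (-(1/2)) = (Real.exp (1/2))⁻¹ := by rw [Real.exp_neg]
    rw [heq] at hm
    have h2' := exp_half_lt_two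
    have hp := Real.exp_pos (1/2)
    have hinv : (Real.exp (1/2))⁻¹ * Real.exp (1/2) = 1 := inv_mul_cancel₀ hp.ne'
    nlinarith [hm, hp, h2', hinv]
  nlinarith

/-- the absorption lemma: `q ≤ e^{-ε} q + δ` implies `q ≤ 2δ/ε`. -/
lemma absorb {q : ℝ≥0∞} {ε δ : ℝ} (hε : 0 < ε) (hε2 : ε ≤ 1/2) (hδ : 0 < δ)
    (hq : q ≠ ⊤)
    (h : q ≤ ENNReal.ofReal (Real.exp (-ε)) * q + ENNReal.ofReal δ) :
    q ≤ ENNReal.ofReal (2*δ/ε) := by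
  have hqr : q.toReal ≤ Real.exp (-ε) * q.toReal + δ := by
    have := ENNReal.toReal_mono (by
      refine ENNReal.add_ne_top.mpr ⟨ENNReal.mul_ne_top ENNReal.ofReal_ne_top hq, ENNReal.ofReal_ne_top⟩) h
    rwa [ENNReal.toReal_add (ENNReal.mul_ne_top ENNReal.ofReal_ne_top hq) ENNReal.ofReal_ne_top,
      ENNReal.toReal_mul, ENNReal.toReal_ofReal (Real.exp_nonneg _),
      ENNReal.toReal_ofReal hδ.le] at this
  have hkey := half_le_one_sub_exp hε hε2
  have hq0 : 0 ≤ q.toReal := ENNReal.toReal_nonneg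
  have : q.toReal ≤ 2*δ/ε := by
    have h3 : q.toReal * (1 - Real.exp (-ε)) ≤ δ := by nlinarith
    have h4 : q.toReal * (ε/2) ≤ δ := by nlinarith
    rw [le_div_iff₀ hε]
    nlinarith
  calc q = ENNReal.ofReal q.toReal := (ENNReal.ofReal_toReal hq).symm
    _ ≤ ENNReal.ofReal (2*δ/ε) := ENNReal.ofReal_le_ofReal this

lemma ofReal_exp_mul (a b : ℝ) :
    ENNReal.ofReal (Real.exp a) * ENNReal.ofReal (Real.exp b)
      = ENNReal.ofReal (Real.exp (a+b)) := by
  rw [← ENNReal.ofReal_mul (Real.exp_nonneg _), Real.exp_add]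

end RealFacts

/-- bad sets for the step from level `n+1` to level `n` -/
def BadLo (P : PMF X) (ε : ℝ) {n : ℕ} (B : (Fin (n+1) → X) → PMF Y) (a : X) : Set Y :=
  {y | marg P (sub B a) y < ENNReal.ofReal (Real.exp (-(2*ε))) * marg P B y}

def BadHi (P : PMF X) (ε : ℝ) {n : ℕ} (B : (Fin (n+1) → X) → PMF Y) (a : X) : Set Y :=
  {y | ENNReal.ofReal (Real.exp (2*ε)) * marg P B y < marg P (sub B a) y}

lemma pm_mono_ptwise {μ μ' : PMF Y} {c : ℝ≥0∞} {S : Set Y}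
    (h : ∀ y ∈ S, c * μ y ≤ μ' y) : c * pm μ S ≤ pm μ' S := by
  show c * μ.toOuterMeasure S ≤ μ'.toOuterMeasure S
  rw [PMF.toOuterMeasure_apply, PMF.toOuterMeasure_apply, ← ENNReal.tsum_mul_left]
  refine ENNReal.tsum_le_tsum fun y => ?_
  by_cases hy : y ∈ S
  · rw [Set.indicator_of_mem hy, Set.indicator_of_mem hy]; exact h y hy
  · rw [Set.indicator_of_notMem hy, Set.indicator_of_notMem hy, mul_zero]

section Chunk3
variable (P : PMF X) (ε δ : ℝ)

lemma mass_hi_a {n : ℕ} {B : (Fin (n+1) → X) → PMF Y}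
    (hε : 0 < ε) (hε2 : ε ≤ 1/2) (hδ : 0 < δ) (h : DPE B ε δ) (a : X) :
    pm (marg P (sub B a)) (BadHi P ε B a) ≤ ENNReal.ofReal (2*δ/ε) := by
  set q := pm (marg P (sub B a)) (BadHi P ε B a) with hq
  set r := pm (marg P B) (BadHi P ε B a) with hr
  have hcmp : ENNReal.ofReal (Real.exp (2*ε)) * r ≤ q :=
    pm_mono_ptwise fun y hy => le_of_lt hy
  have hdp : q ≤ ENNReal.ofReal (Real.exp ε) * r + ENNReal.ofReal δ :=
    marg_dp_mix₁ P h a _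
  refine absorb hε hε2 hδ (pm_ne_top _ _) ?_
  have hrq : r ≤ ENNReal.ofReal (Real.exp (-(2*ε))) * q := by
    calc r = ENNReal.ofReal (Real.exp (-(2*ε))) * (ENNReal.ofReal (Real.exp (2*ε)) * r) := by
          rw [← mul_assoc, ofReal_exp_mul]
          norm_num
      _ ≤ ENNReal.ofReal (Real.exp (-(2*ε))) * q := mul_le_mul_right hcmp _
  calc q ≤ ENNReal.ofReal (Real.exp ε) * r + ENNReal.ofReal δ := hdp
    _ ≤ ENNReal.ofReal (Real.exp ε) * (ENNReal.ofReal (Real.exp (-(2*ε))) * q)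
        + ENNReal.ofReal δ := by gcongr
    _ = ENNReal.ofReal (Real.exp (-ε)) * q + ENNReal.ofReal δ := by
        rw [← mul_assoc, ofReal_exp_mul, show ε + -(2*ε) = -ε by ring]

lemma mass_lo_mix {n : ℕ} {B : (Fin (n+1) → X) → PMF Y}
    (hε : 0 < ε) (hε2 : ε ≤ 1/2) (hδ : 0 < δ) (h : DPE B ε δ) (a : X) :
    pm (marg P B) (BadLo P ε B a) ≤ ENNReal.ofReal (2*δ/ε) := by
  set q := pm (marg P B) (BadLo P ε B a) with hq
  set r := pm (marg P (sub B a)) (BadLo P ε B a) with hr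
  have hcmp : ENNReal.ofReal (Real.exp (2*ε)) * r ≤ q := by
    refine pm_mono_ptwise fun y hy => ?_
    have hy' : marg P (sub B a) y < ENNReal.ofReal (Real.exp (-(2*ε))) * marg P B y := hy
    calc ENNReal.ofReal (Real.exp (2*ε)) * marg P (sub B a) y
        ≤ ENNReal.ofReal (Real.exp (2*ε)) * (ENNReal.ofReal (Real.exp (-(2*ε))) * marg P B y) :=
          mul_le_mul_right hy'.le _
      _ = marg P B y := by rw [← mul_assoc, ofReal_exp_mul]; norm_num
  have hdp : q ≤ ENNReal.ofReal (Real.exp ε) * r + ENNReal.ofReal δ :=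
    marg_dp_mix₂ P h a _
  refine absorb hε hε2 hδ (pm_ne_top _ _) ?_
  have hrq : r ≤ ENNReal.ofReal (Real.exp (-(2*ε))) * q := by
    calc r = ENNReal.ofReal (Real.exp (-(2*ε))) * (ENNReal.ofReal (Real.exp (2*ε)) * r) := by
          rw [← mul_assoc, ofReal_exp_mul]; norm_num
      _ ≤ ENNReal.ofReal (Real.exp (-(2*ε))) * q := mul_le_mul_right hcmp _
  calc q ≤ ENNReal.ofReal (Real.exp ε) * r + ENNReal.ofReal δ := hdp
    _ ≤ ENNReal.ofReal (Real.exp ε) * (ENNReal.ofReal (Real.exp (-(2*ε))) * q)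
        + ENNReal.ofReal δ := by gcongr
    _ = ENNReal.ofReal (Real.exp (-ε)) * q + ENNReal.ofReal δ := by
        rw [← mul_assoc, ofReal_exp_mul, show ε + -(2*ε) = -ε by ring]

lemma exp_le_two {ε : ℝ} (hε : 0 < ε) (hε2 : ε ≤ 1/2) : Real.exp ε ≤ 2 :=
  le_of_lt (lt_of_le_of_lt (Real.exp_le_exp.mpr hε2) exp_half_lt_two)

lemma step_bound {q r : ℝ≥0∞} {ε δ : ℝ} (hε : 0 < ε) (hε2 : ε ≤ 1/2) (hδ : 0 < δ)
    (hδε : δ < ε)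
    (h : q ≤ ENNReal.ofReal (Real.exp ε) * r + ENNReal.ofReal δ)
    (hr : r ≤ ENNReal.ofReal (2*δ/ε)) : q ≤ ENNReal.ofReal (5*δ/ε) := by
  calc q ≤ ENNReal.ofReal (Real.exp ε) * r + ENNReal.ofReal δ := h
    _ ≤ ENNReal.ofReal (Real.exp ε) * ENNReal.ofReal (2*δ/ε) + ENNReal.ofReal δ := by gcongr
    _ = ENNReal.ofReal (Real.exp ε * (2*δ/ε)) + ENNReal.ofReal δ := by
        rw [ENNReal.ofReal_mul (Real.exp_nonneg _)]
    _ = ENNReal.ofReal (Real.exp ε * (2*δ/ε) + δ) := by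
        rw [← ENNReal.ofReal_add (by positivity) hδ.le]
    _ ≤ ENNReal.ofReal (5*δ/ε) := by
        refine ENNReal.ofReal_le_ofReal ?_
        have h2 : Real.exp ε ≤ 2 := exp_le_two hε hε2
        have hde : δ ≤ δ/ε := by
          rw [le_div_iff₀ hε]; nlinarith
        have hpos : (0:ℝ) < δ/ε := div_pos hδ hε
        have e1 : 2*δ/ε = 2*(δ/ε) := by ring
        have e2 : 5*δ/ε = 5*(δ/ε) := by ring
        have hexp0 := Real.exp_nonneg ε
        nlinarith [hpos, hde, h2, e1, e2]

lemma mass_hi_mix {n : ℕ} {B : (Fin (n+1) → X) → PMF Y}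
    (hε : 0 < ε) (hε2 : ε ≤ 1/2) (hδ : 0 < δ) (hδε : δ < ε) (h : DPE B ε δ) (a : X) :
    pm (marg P B) (BadHi P ε B a) ≤ ENNReal.ofReal (5*δ/ε) :=
  step_bound hε hε2 hδ hδε (marg_dp_mix₂ P h a _) (mass_hi_a P ε δ hε hε2 hδ h a)

lemma mass_lo_a {n : ℕ} {B : (Fin (n+1) → X) → PMF Y}
    (hε : 0 < ε) (hε2 : ε ≤ 1/2) (hδ : 0 < δ) (hδε : δ < ε) (h : DPE B ε δ) (a : X) :
    pm (marg P (sub B a)) (BadLo P ε B a) ≤ ENNReal.ofReal (5*δ/ε) :=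
  step_bound hε hε2 hδ hδε (marg_dp_mix₁ P h a _) (mass_lo_mix P ε δ hε hε2 hδ h a)

end Chunk3

open Classical in
noncomputable def w1 (P : PMF X) (ε : ℝ) {n : ℕ} (B : (Fin (n+1) → X) → PMF Y) (y : Y) : ℝ≥0∞ :=
  ∑' a, P a * ((if y ∈ BadLo P ε B a then 1 else 0) + (if y ∈ BadHi P ε B a then 1 else 0))

def stepOK (P : PMF X) (ε : ℝ) {n : ℕ} (B : (Fin (n+1) → X) → PMF Y) (a : X) (y : Y) : Prop :=
  y ∉ BadLo P ε B a ∧ y ∉ BadHi P ε B a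

open Classical in
noncomputable def GoodI (P : PMF X) (ε : ℝ) :
    {n : ℕ} → ((Fin n → X) → PMF Y) → (Fin n → X) → Y → ℝ≥0∞
  | 0, _, _, _ => 1
  | _+1, B, x, y =>
      (if stepOK P ε B (x 0) y then 1 else 0) * GoodI P ε (sub B (x 0)) (Fin.tail x) y

open Classical in
noncomputable def NotGoodI (P : PMF X) (ε : ℝ) :
    {n : ℕ} → ((Fin n → X) → PMF Y) → (Fin n → X) → Y → ℝ≥0∞
  | 0, _, _, _ => 0
  | _+1, B, x, y =>
      (if stepOK P ε B (x 0) y then 0 else 1)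
        + (if stepOK P ε B (x 0) y then 1 else 0) * NotGoodI P ε (sub B (x 0)) (Fin.tail x) y

noncomputable def Pen (P : PMF X) (ε : ℝ) :
    {n : ℕ} → ((Fin n → X) → PMF Y) → (Fin n → X) → Y → ℝ≥0∞
  | 0, _, _, _ => 1
  | _+1, B, x, y => (1 + w1 P ε B y)⁻¹ * Pen P ε (sub B (x 0)) (Fin.tail x) y

noncomputable def Wsum (P : PMF X) (ε : ℝ) :
    {n : ℕ} → ((Fin n → X) → PMF Y) → (Fin n → X) → Y → ℝ≥0∞
  | 0, _, _, _ => 0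
  | _+1, B, x, y => w1 P ε B y + Wsum P ε (sub B (x 0)) (Fin.tail x) y

section Chunk4
variable (P : PMF X) (ε : ℝ)

open Classical

lemma GoodI_cons {n : ℕ} (B : (Fin (n+1) → X) → PMF Y) (a : X) (t : Fin n → X) (y : Y) :
    GoodI P ε B (Fin.cons a t) y
      = (if stepOK P ε B a y then 1 else 0) * GoodI P ε (sub B a) t y := by
  rw [GoodI]; simp [Fin.cons_zero, Fin.tail_cons]

lemma NotGoodI_cons {n : ℕ} (B : (Fin (n+1) → X) → PMF Y) (a : X) (t : Fin n → X) (y : Y) :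
    NotGoodI P ε B (Fin.cons a t) y
      = (if stepOK P ε B a y then 0 else 1)
        + (if stepOK P ε B a y then 1 else 0) * NotGoodI P ε (sub B a) t y := by
  rw [NotGoodI]; simp [Fin.cons_zero, Fin.tail_cons]

lemma Pen_cons {n : ℕ} (B : (Fin (n+1) → X) → PMF Y) (a : X) (t : Fin n → X) (y : Y) :
    Pen P ε B (Fin.cons a t) y = (1 + w1 P ε B y)⁻¹ * Pen P ε (sub B a) t y := by
  rw [Pen]; simp [Fin.cons_zero, Fin.tail_cons]

lemma Wsum_cons {n : ℕ} (B : (Fin (n+1) → X) → PMF Y) (a : X) (t : Fin n → X) (y : Y) :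
    Wsum P ε B (Fin.cons a t) y = w1 P ε B y + Wsum P ε (sub B a) t y := by
  rw [Wsum]; simp [Fin.cons_zero, Fin.tail_cons]

lemma w1_le_two {n : ℕ} (B : (Fin (n+1) → X) → PMF Y) (y : Y) :
    w1 P ε B y ≤ 2 := by
  have : w1 P ε B y ≤ (1:ℝ≥0∞) + 1 := by
    rw [w1]
    refine weighted_le _ fun a => ?_
    gcongr <;> split <;> norm_num
  simpa [one_add_one_eq_two] using this

lemma w1_ne_top {n : ℕ} (B : (Fin (n+1) → X) → PMF Y) (y : Y) : w1 P ε B y ≠ ⊤ :=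
  ne_top_of_le_ne_top (by norm_num) (w1_le_two P ε B y)

lemma Wsum_ne_top {n : ℕ} (B : (Fin n → X) → PMF Y) (x : Fin n → X) (y : Y) :
    Wsum P ε B x y ≠ ⊤ := by
  induction n with
  | zero => rw [Wsum]; exact zero_ne_top
  | succ n ih =>
      rw [← Fin.cons_self_tail x, Wsum_cons]
      exact ENNReal.add_ne_top.mpr ⟨w1_ne_top P ε B y, ih _ _⟩

lemma good_add_notgood {n : ℕ} (B : (Fin n → X) → PMF Y) (x : Fin n → X) (y : Y) :
    GoodI P ε B x y + NotGoodI P ε B x y = 1 := by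
  induction n with
  | zero => rw [GoodI, NotGoodI, add_zero]
  | succ n ih =>
      rw [← Fin.cons_self_tail x, GoodI_cons, NotGoodI_cons]
      by_cases h : stepOK P ε B (x 0) y
      · simp only [if_pos h, one_mul, zero_add]
        exact ih _ _
      · simp [if_neg h]

lemma GoodI_le_one {n : ℕ} (B : (Fin n → X) → PMF Y) (x : Fin n → X) (y : Y) :
    GoodI P ε B x y ≤ 1 :=
  le_of_le_of_eq (le_add_right le_rfl) (good_add_notgood P ε B x y)

lemma penExp {n : ℕ} (B : (Fin n → X) → PMF Y) (x : Fin n → X) (y : Y) :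
    (1:ℝ≥0∞) ≤ ENNReal.ofReal (Real.exp ((Wsum P ε B x y).toReal)) * Pen P ε B x y := by
  induction n with
  | zero =>
      rw [Wsum, Pen]
      simp
  | succ n ih =>
      rw [← Fin.cons_self_tail x, Wsum_cons, Pen_cons,
        ENNReal.toReal_add (w1_ne_top P ε B y) (Wsum_ne_top P ε _ _ y), Real.exp_add,
        ENNReal.ofReal_mul (Real.exp_nonneg _)]
      set w := w1 P ε B y with hw
      have hwt : w ≠ ⊤ := w1_ne_top P ε B y
      have h1 : (1 + w) ≤ ENNReal.ofReal (Real.exp w.toReal) := by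
        have : (1 + w) = ENNReal.ofReal (w.toReal + 1) := by
          rw [ENNReal.ofReal_add ENNReal.toReal_nonneg zero_le_one,
            ENNReal.ofReal_toReal hwt, ENNReal.ofReal_one, add_comm]
        rw [this]
        exact ENNReal.ofReal_le_ofReal (Real.add_one_le_exp _)
      calc (1:ℝ≥0∞) = (1 + w) * (1 + w)⁻¹ :=
            (ENNReal.mul_inv_cancel (one_pos.trans_le le_self_add).ne' (by
              exact ENNReal.add_ne_top.mpr ⟨one_ne_top, hwt⟩)).symm
        _ ≤ (ENNReal.ofReal (Real.exp w.toReal) * (1 + w)⁻¹) *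
              (ENNReal.ofReal (Real.exp ((Wsum P ε (sub B (x 0)) (Fin.tail x) y).toReal)) *
                Pen P ε (sub B (x 0)) (Fin.tail x) y) := by
            calc (1 + w) * (1 + w)⁻¹
                ≤ (ENNReal.ofReal (Real.exp w.toReal) * (1 + w)⁻¹) * 1 := by
                  rw [mul_one]; exact mul_le_mul_left h1 _
              _ ≤ _ := mul_le_mul_right (ih _ _) _
        _ = _ := by ring
end Chunk4

section Chunk5
variable (P : PMF X) (ε δ : ℝ)
open Classical

lemma KF_le (hε : 0 < ε) (hε2 : ε ≤ 1/2) :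
    Real.exp (2*ε) + Real.exp (-(2*ε)) - 1 ≤ 1 + 30*ε^2 := by
  set u := Real.exp (2*ε) with hu
  set v := Real.exp (-(2*ε)) with hv
  have e1 : v * u = 1 := by rw [hu, hv, ← Real.exp_add]; norm_num
  have hu1 : 1 ≤ u := Real.one_le_exp (by linarith)
  have hv0 : 0 < v := Real.exp_pos _
  have h1 : u - 1 ≤ 2*ε*u := by
    have := Real.add_one_le_exp (-(2*ε))
    have h' : (1 - 2*ε) * u ≤ v * u := by
      apply mul_le_mul_of_nonneg_right _ (by linarith)
      linarith
    rw [e1] at h'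
    nlinarith
  have hu272 : u ≤ 2.7182818286 := by
    calc u ≤ Real.exp 1 := Real.exp_le_exp.mpr (by linarith)
      _ ≤ 2.7182818286 := Real.exp_one_lt_d9.le
  have e2 : v*(u-1)^2 = u + v - 2 := by linear_combination (u - 2) * e1
  have e3 : (u-1)^2 ≤ (2*ε*u)^2 := by nlinarith
  have e4 : v*(2*ε*u)^2 = 4*ε^2*u := by linear_combination (4*ε^2*u) * e1
  have e5 : v*(u-1)^2 ≤ v*(2*ε*u)^2 := by nlinarith
  nlinarith [sq_nonneg ε]

lemma ptwise_sq {qa qb : ℝ≥0∞} (hqa : qa ≤ 1) (hqb : qb ≤ 1) {m M : ℝ}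
    (hm : 0 ≤ m) (hM : 0 ≤ M) (hMM : m*M = 1)
    (h1 : ENNReal.ofReal m * qb ≤ qa) (h2 : qa ≤ ENNReal.ofReal M * qb) :
    qa^2 + qb^2 ≤ ENNReal.ofReal (m+M) * (qa*qb) := by
  have hqat : qa ≠ ⊤ := ne_top_of_le_ne_top one_ne_top hqa
  have hqbt : qb ≠ ⊤ := ne_top_of_le_ne_top one_ne_top hqb
  set t := qa.toReal with ht
  set s := qb.toReal with hs
  have ht0 : 0 ≤ t := ENNReal.toReal_nonneg
  have hs0 : 0 ≤ s := ENNReal.toReal_nonneg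
  have h1r : m * s ≤ t := by
    have := ENNReal.toReal_mono hqat h1
    rwa [ENNReal.toReal_mul, ENNReal.toReal_ofReal hm] at this
  have h2r : t ≤ M * s := by
    have := ENNReal.toReal_mono (ENNReal.mul_ne_top ENNReal.ofReal_ne_top hqbt) h2
    rwa [ENNReal.toReal_mul, ENNReal.toReal_ofReal hM] at this
  have key : t^2 + s^2 ≤ (m+M)*(t*s) := by
    nlinarith [mul_nonneg (sub_nonneg.mpr h1r) (sub_nonneg.mpr h2r), hMM]
  have hqa' : qa = ENNReal.ofReal t := (ENNReal.ofReal_toReal hqat).symm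
  have hqb' : qb = ENNReal.ofReal s := (ENNReal.ofReal_toReal hqbt).symm
  rw [hqa', hqb']
  calc ENNReal.ofReal t ^ 2 + ENNReal.ofReal s ^ 2
      = ENNReal.ofReal (t^2 + s^2) := by
        rw [ENNReal.ofReal_add (by positivity) (by positivity),
          ENNReal.ofReal_pow ht0, ENNReal.ofReal_pow hs0]
    _ ≤ ENNReal.ofReal ((m+M)*(t*s)) := ENNReal.ofReal_le_ofReal key
    _ = ENNReal.ofReal (m+M) * (ENNReal.ofReal t * ENNReal.ofReal s) := by
        rw [ENNReal.ofReal_mul (by positivity), ENNReal.ofReal_mul ht0]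

/-- the per-step second moment bound -/
lemma step_sm {n : ℕ} (B : (Fin (n+1) → X) → PMF Y) (y : Y)
    (hε : 0 < ε) :
    ∑' a, P a * ((if stepOK P ε B a y then 1 else 0) * (marg P (sub B a) y)^2)
      ≤ (ENNReal.ofReal (Real.exp (2*ε) + Real.exp (-(2*ε)) - 1) + w1 P ε B y)
          * (marg P B y)^2 := by
  set m := Real.exp (-(2*ε)) with hm
  set M := Real.exp (2*ε) with hM
  have hm0 : 0 ≤ m := Real.exp_nonneg _
  have hM0 : 0 ≤ M := Real.exp_nonneg _
  have hmM : m*M = 1 := by rw [hm, hM, ← Real.exp_add]; norm_num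
  have hM1 : 1 ≤ M := Real.one_le_exp (by linarith)
  set qb := marg P B y with hqb
  have hqb1 : qb ≤ 1 := PMF.coe_le_one _ _
  have hqbt : qb ≠ ⊤ := ne_top_of_le_ne_top one_ne_top hqb1
  have hqb2t : qb^2 ≠ ⊤ := by
    exact pow_ne_top hqbt
  -- per-a inequality
  have per_a : ∀ a, P a * ((if stepOK P ε B a y then 1 else 0) * (marg P (sub B a) y)^2)
      + P a * qb^2
      ≤ ENNReal.ofReal (m+M) * (P a * (marg P (sub B a) y * qb))
        + P a * (((if y ∈ BadLo P ε B a then 1 else 0)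
            + (if y ∈ BadHi P ε B a then 1 else 0)) * qb^2) := by
    intro a
    set qa := marg P (sub B a) y with hqa
    have hqa1 : qa ≤ 1 := PMF.coe_le_one _ _
    by_cases hok : stepOK P ε B a y
    · rw [if_pos hok]
      obtain ⟨hlo, hhi⟩ := hok
      have h1 : ENNReal.ofReal m * qb ≤ qa := not_lt.mp hlo
      have h2 : qa ≤ ENNReal.ofReal M * qb := not_lt.mp hhi
      have := ptwise_sq hqa1 hqb1 hm0 hM0 hmM h1 h2
      calc P a * (1 * qa^2) + P a * qb^2
          = P a * (qa^2 + qb^2) := by ring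
        _ ≤ P a * (ENNReal.ofReal (m+M) * (qa*qb)) := mul_le_mul_right this _
        _ ≤ ENNReal.ofReal (m+M) * (P a * (qa * qb)) + P a * (((if y ∈ BadLo P ε B a then 1 else 0)
              + (if y ∈ BadHi P ε B a then 1 else 0)) * qb^2) := by
            rw [show ENNReal.ofReal (m+M) * (P a * (qa * qb)) = P a * (ENNReal.ofReal (m+M) * (qa*qb)) by ring]
            exact le_add_right le_rfl
    · rw [if_neg hok]
      have hbad : (1:ℝ≥0∞) ≤ (if y ∈ BadLo P ε B a then 1 else 0)
          + (if y ∈ BadHi P ε B a then 1 else 0) := by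
        rw [stepOK, not_and_or] at hok
        rcases hok with h | h
        · rw [if_pos (not_not.mp h)]; exact le_add_right le_rfl
        · rw [if_pos (not_not.mp h)]; exact le_add_left le_rfl
      calc P a * (0 * qa^2) + P a * qb^2 = P a * (1 * qb^2) := by ring
        _ ≤ P a * (((if y ∈ BadLo P ε B a then 1 else 0)
              + (if y ∈ BadHi P ε B a then 1 else 0)) * qb^2) := by
            exact mul_le_mul_right (mul_le_mul_left hbad _) _
        _ ≤ _ := le_add_left le_rfl
  -- sum the per-a inequalities
  have hsum : (∑' a, P a * ((if stepOK P ε B a y then 1 else 0) * (marg P (sub B a) y)^2))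
      + qb^2
      ≤ ENNReal.ofReal (m+M) * (qb*qb) + w1 P ε B y * qb^2 := by
    calc (∑' a, P a * ((if stepOK P ε B a y then 1 else 0) * (marg P (sub B a) y)^2)) + qb^2
        = ∑' a, (P a * ((if stepOK P ε B a y then 1 else 0) * (marg P (sub B a) y)^2)
            + P a * qb^2) := by
          rw [ENNReal.tsum_add, ENNReal.tsum_mul_right, PMF.tsum_coe, one_mul]
      _ ≤ ∑' a, (ENNReal.ofReal (m+M) * (P a * (marg P (sub B a) y * qb))
            + P a * (((if y ∈ BadLo P ε B a then 1 else 0)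
              + (if y ∈ BadHi P ε B a then 1 else 0)) * qb^2)) :=
          ENNReal.tsum_le_tsum fun a => per_a a
      _ = ENNReal.ofReal (m+M) * ((∑' a, P a * marg P (sub B a) y) * qb)
            + (∑' a, P a * ((if y ∈ BadLo P ε B a then 1 else 0)
              + (if y ∈ BadHi P ε B a then 1 else 0))) * qb^2 := by
          rw [ENNReal.tsum_add]
          congr 1
          · rw [← ENNReal.tsum_mul_right, ← ENNReal.tsum_mul_left]
            exact tsum_congr fun a => by ring
          · rw [← ENNReal.tsum_mul_right]
            exact tsum_congr fun a => by ring
      _ = ENNReal.ofReal (m+M) * (qb*qb) + w1 P ε B y * qb^2 := by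
          rw [← marg_val, ← w1]
  -- cancel qb^2
  have hsplit : ENNReal.ofReal (m+M) * (qb*qb) + w1 P ε B y * qb^2
      = ((ENNReal.ofReal (M+m-1) + w1 P ε B y) * qb^2) + qb^2 := by
    have h : ENNReal.ofReal (m+M) = ENNReal.ofReal (M+m-1) + 1 := by
      rw [← ENNReal.ofReal_one, ← ENNReal.ofReal_add (by linarith) (by norm_num)]
      congr 1
      ring
    rw [h, sq]
    ring
  rw [hsplit] at hsum
  exact (ENNReal.add_le_add_iff_right hqb2t).mp hsum

end Chunk5

section Chunk6
variable (P : PMF X) {ε δ : ℝ}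
open Classical

lemma tsum_fin0 (f : (Fin 0 → X) → ℝ≥0∞) :
    ∑' x, f x = f (fun i : Fin 0 => i.elim0) := by
  exact tsum_eq_single (fun i : Fin 0 => i.elim0)
    (fun b hb => absurd (funext fun i : Fin 0 => i.elim0) hb)

lemma iid_zero : iidPMF P 0 (fun i : Fin 0 => i.elim0) = 1 := by
  rw [iidPMF, PMF.pure_apply, if_pos rfl]

lemma marg_zero (B : (Fin 0 → X) → PMF Y) : marg P B = B (fun i : Fin 0 => i.elim0) := by
  rw [marg, iidPMF, PMF.pure_bind]

lemma sm_main (hε : 0 < ε) (hε2 : ε ≤ 1/2) :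
    ∀ {n : ℕ} (B : (Fin n → X) → PMF Y), DPE B ε δ → ∀ y : Y,
    ∑' x, iidPMF P n x * (GoodI P ε B x y * (Pen P ε B x y * ((B x) y)^2))
      ≤ (ENNReal.ofReal (1 + 30*ε^2))^n * (marg P B y)^2 := by
  intro n
  induction n with
  | zero =>
      intro B hB y
      rw [tsum_fin0, iid_zero, GoodI, Pen, marg_zero]
      simp
  | succ n ih =>
      intro B hB y
      set K := ENNReal.ofReal (1 + 30*ε^2) with hK
      set w := w1 P ε B y with hw
      have hwt : w ≠ ⊤ := w1_ne_top P ε B y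
      have hK1 : (1:ℝ≥0∞) ≤ K := by
        rw [hK, ENNReal.one_le_ofReal]
        nlinarith
      rw [tsum_cons]
      have hrw : ∀ (a : X) (t : Fin n → X),
          iidPMF P (n+1) (Fin.cons a t) * (GoodI P ε B (Fin.cons a t) y *
            (Pen P ε B (Fin.cons a t) y * ((B (Fin.cons a t)) y)^2))
          = (P a * ((if stepOK P ε B a y then 1 else 0) * (1 + w)⁻¹))
            * (iidPMF P n t * (GoodI P ε (sub B a) t y *
              (Pen P ε (sub B a) t y * ((sub B a t) y)^2))) := by
        intro a t
        rw [iid_cons, GoodI_cons, Pen_cons]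
        simp only [sub]
        ring
      calc ∑' a, ∑' t, iidPMF P (n+1) (Fin.cons a t) * (GoodI P ε B (Fin.cons a t) y *
            (Pen P ε B (Fin.cons a t) y * ((B (Fin.cons a t)) y)^2))
          = ∑' a, (P a * ((if stepOK P ε B a y then 1 else 0) * (1 + w)⁻¹)) *
              ∑' t, iidPMF P n t * (GoodI P ε (sub B a) t y *
                (Pen P ε (sub B a) t y * ((sub B a t) y)^2)) := by
            refine tsum_congr fun a => ?_
            rw [← ENNReal.tsum_mul_left]
            exact tsum_congr fun t => hrw a t
        _ ≤ ∑' a, (P a * ((if stepOK P ε B a y then 1 else 0) * (1 + w)⁻¹)) *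
              (K^n * (marg P (sub B a) y)^2) :=
            ENNReal.tsum_le_tsum fun a =>
              mul_le_mul_right (ih (sub B a) (dpe_sub hB a) y) _
        _ = ((1 + w)⁻¹ * K^n) *
              ∑' a, P a * ((if stepOK P ε B a y then 1 else 0) * (marg P (sub B a) y)^2) := by
            rw [← ENNReal.tsum_mul_left]
            exact tsum_congr fun a => by ring
        _ ≤ ((1 + w)⁻¹ * K^n) *
              ((ENNReal.ofReal (Real.exp (2*ε) + Real.exp (-(2*ε)) - 1) + w) * (marg P B y)^2) :=
            mul_le_mul_right (step_sm P ε B y hε) _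
        _ ≤ ((1 + w)⁻¹ * K^n) * ((K * (1 + w)) * (marg P B y)^2) := by
            refine mul_le_mul_right (mul_le_mul_left ?_ _) _
            have h1 : ENNReal.ofReal (Real.exp (2*ε) + Real.exp (-(2*ε)) - 1) ≤ K :=
              ENNReal.ofReal_le_ofReal (KF_le ε hε hε2)
            calc ENNReal.ofReal (Real.exp (2*ε) + Real.exp (-(2*ε)) - 1) + w
                ≤ K + K * w := add_le_add h1 (le_mul_of_one_le_left zero_le hK1)
              _ = K * (1 + w) := by ring
        _ = (K^n * K) * (marg P B y)^2 * ((1 + w)⁻¹ * (1 + w)) := by ring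
        _ = K^(n+1) * (marg P B y)^2 := by
            rw [ENNReal.inv_mul_cancel (one_pos.trans_le le_self_add).ne'
              (ENNReal.add_ne_top.mpr ⟨one_ne_top, hwt⟩), mul_one]
            ring

end Chunk6

section Chunk7
variable (P : PMF X) {ε δ : ℝ}
open Classical

lemma pm_eq_tsum_ite (μ : PMF Y) (S : Set Y) :
    pm μ S = ∑' y, if y ∈ S then μ y else 0 := by
  show μ.toOuterMeasure S = _
  rw [PMF.toOuterMeasure_apply]
  exact tsum_congr fun y => by
    by_cases h : y ∈ S
    · rw [Set.indicator_of_mem h, if_pos h]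
    · rw [Set.indicator_of_notMem h, if_neg h]

lemma tsum_mul_ind (μ : PMF Y) (S : Set Y) :
    ∑' y, μ y * (if y ∈ S then 1 else 0) = pm μ S := by
  rw [pm_eq_tsum_ite]
  exact tsum_congr fun y => by
    by_cases h : y ∈ S <;> simp [h]

lemma helper1 {κ : Type} (p : PMF κ) (q : κ → PMF Y) (g : Y → ℝ≥0∞) :
    ∑' t, p t * ∑' y, (q t) y * g y = ∑' y, (p.bind q) y * g y := by
  have h1 : ∀ t, p t * ∑' y, (q t) y * g y = ∑' y, p t * ((q t) y * g y) :=
    fun t => ENNReal.tsum_mul_left.symm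
  calc ∑' t, p t * ∑' y, (q t) y * g y
      = ∑' t, ∑' y, p t * ((q t) y * g y) := tsum_congr h1
    _ = ∑' y, ∑' t, p t * ((q t) y * g y) := ENNReal.tsum_comm
    _ = ∑' y, (p.bind q) y * g y := by
        refine tsum_congr fun y => ?_
        rw [PMF.bind_apply, ← ENNReal.tsum_mul_right]
        exact tsum_congr fun t => by ring

/-- expected `NotGoodI` mass is at most `n · 7δ/ε`. -/
lemma notgood_mass (hε : 0 < ε) (hε2 : ε ≤ 1/2) (hδ : 0 < δ) (hδε : δ < ε) :
    ∀ {n : ℕ} (B : (Fin n → X) → PMF Y), DPE B ε δ →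
    ∑' x, iidPMF P n x * ∑' y, ((B x) y * NotGoodI P ε B x y)
      ≤ (n : ℝ≥0∞) * ENNReal.ofReal (7*δ/ε) := by
  intro n
  induction n with
  | zero =>
      intro B hB
      simp [NotGoodI]
  | succ n ih =>
      intro B hB
      rw [tsum_cons]
      have key : ∀ a : X, ∑' t, iidPMF P (n+1) (Fin.cons a t) *
          ∑' y, ((B (Fin.cons a t)) y * NotGoodI P ε B (Fin.cons a t) y)
          ≤ P a * (ENNReal.ofReal (7*δ/ε) + (n : ℝ≥0∞) * ENNReal.ofReal (7*δ/ε)) := by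
        intro a
        have hsplit : ∀ t, ∑' y, ((B (Fin.cons a t)) y * NotGoodI P ε B (Fin.cons a t) y)
            ≤ (∑' y, (sub B a t) y * ((if y ∈ BadLo P ε B a then 1 else 0)
                + (if y ∈ BadHi P ε B a then 1 else 0)))
              + ∑' y, (sub B a t) y *
                  ((if stepOK P ε B a y then 1 else 0) * NotGoodI P ε (sub B a) t y) := by
          intro t
          rw [← ENNReal.tsum_add]
          refine ENNReal.tsum_le_tsum fun y => ?_
          rw [NotGoodI_cons]
          simp only [sub]
          by_cases h : stepOK P ε B a y
          · rw [if_pos h, if_pos h]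
            have hlo : y ∉ BadLo P ε B a := h.1
            have hhi : y ∉ BadHi P ε B a := h.2
            rw [if_neg hlo, if_neg hhi]
            exact le_of_eq (by ring)
          · rw [if_neg h, if_neg h]
            have hb : (1:ℝ≥0∞) ≤ (if y ∈ BadLo P ε B a then (1:ℝ≥0∞) else 0)
                + (if y ∈ BadHi P ε B a then 1 else 0) := by
              rw [stepOK, not_and_or] at h
              rcases h with h | h
              · rw [if_pos (not_not.mp h)]; exact le_add_right le_rfl
              · rw [if_pos (not_not.mp h)]; exact le_add_left le_rfl
            calc B (Fin.cons a t) y * (1 + 0 * NotGoodI P ε (sub B a) t y)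
                = B (Fin.cons a t) y * 1 := by ring
              _ ≤ B (Fin.cons a t) y * ((if y ∈ BadLo P ε B a then 1 else 0)
                  + (if y ∈ BadHi P ε B a then 1 else 0)) := mul_le_mul_right hb _
              _ ≤ _ := le_add_right le_rfl
        calc ∑' t, iidPMF P (n+1) (Fin.cons a t) *
            ∑' y, ((B (Fin.cons a t)) y * NotGoodI P ε B (Fin.cons a t) y)
            ≤ P a * ∑' t, iidPMF P n t *
                ((∑' y, (sub B a t) y * ((if y ∈ BadLo P ε B a then 1 else 0)
                  + (if y ∈ BadHi P ε B a then 1 else 0)))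
                + ∑' y, (sub B a t) y *
                    ((if stepOK P ε B a y then 1 else 0) * NotGoodI P ε (sub B a) t y)) := by
              rw [← ENNReal.tsum_mul_left]
              refine ENNReal.tsum_le_tsum fun t => ?_
              rw [iid_cons, mul_assoc]
              exact mul_le_mul_right (mul_le_mul_right (hsplit t) _) _
          _ = P a * ((∑' t, iidPMF P n t * ∑' y, (sub B a t) y *
                  ((if y ∈ BadLo P ε B a then 1 else 0) + (if y ∈ BadHi P ε B a then 1 else 0)))
                + ∑' t, iidPMF P n t * ∑' y, (sub B a t) y *
                    ((if stepOK P ε B a y then 1 else 0) * NotGoodI P ε (sub B a) t y)) := by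
              rw [← ENNReal.tsum_add]
              congr 1
              exact tsum_congr fun t => by rw [mul_add]
          _ ≤ P a * (ENNReal.ofReal (7*δ/ε) + (n : ℝ≥0∞) * ENNReal.ofReal (7*δ/ε)) := by
              refine mul_le_mul_right (add_le_add ?_ ?_) _
              · rw [helper1]
                have : ∀ y : Y, ((iidPMF P n).bind (sub B a)) y *
                    ((if y ∈ BadLo P ε B a then (1:ℝ≥0∞) else 0)
                      + (if y ∈ BadHi P ε B a then 1 else 0))
                    = marg P (sub B a) y * (if y ∈ BadLo P ε B a then 1 else 0)
                      + marg P (sub B a) y * (if y ∈ BadHi P ε B a then 1 else 0) := by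
                  intro y
                  rw [marg]
                  ring
                rw [tsum_congr this, ENNReal.tsum_add, tsum_mul_ind, tsum_mul_ind]
                calc pm (marg P (sub B a)) (BadLo P ε B a) + pm (marg P (sub B a)) (BadHi P ε B a)
                    ≤ ENNReal.ofReal (5*δ/ε) + ENNReal.ofReal (2*δ/ε) :=
                      add_le_add (mass_lo_a P ε δ hε hε2 hδ hδε hB a)
                        (mass_hi_a P ε δ hε hε2 hδ hB a)
                  _ = ENNReal.ofReal (7*δ/ε) := by
                      rw [← ENNReal.ofReal_add (by positivity) (by positivity)]
                      congr 1
                      ring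
              · calc ∑' t, iidPMF P n t * ∑' y, (sub B a t) y *
                      ((if stepOK P ε B a y then 1 else 0) * NotGoodI P ε (sub B a) t y)
                    ≤ ∑' t, iidPMF P n t * ∑' y, (sub B a t) y * NotGoodI P ε (sub B a) t y := by
                      refine ENNReal.tsum_le_tsum fun t => mul_le_mul_right ?_ _
                      refine ENNReal.tsum_le_tsum fun y => mul_le_mul_right ?_ _
                      split <;> simp
                  _ ≤ (n : ℝ≥0∞) * ENNReal.ofReal (7*δ/ε) := ih (sub B a) (dpe_sub hB a)
      calc ∑' a, ∑' t, iidPMF P (n+1) (Fin.cons a t) *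
            ∑' y, ((B (Fin.cons a t)) y * NotGoodI P ε B (Fin.cons a t) y)
          ≤ ∑' a, P a * (ENNReal.ofReal (7*δ/ε) + (n : ℝ≥0∞) * ENNReal.ofReal (7*δ/ε)) :=
            ENNReal.tsum_le_tsum key
        _ = ENNReal.ofReal (7*δ/ε) + (n : ℝ≥0∞) * ENNReal.ofReal (7*δ/ε) := by
            rw [ENNReal.tsum_mul_right, PMF.tsum_coe, one_mul]
        _ = ((n+1 : ℕ) : ℝ≥0∞) * ENNReal.ofReal (7*δ/ε) := by
            push_cast
            ring

/-- expected `Wsum` is at most `n · 7δ/ε`. -/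
lemma wsum_exp (hε : 0 < ε) (hε2 : ε ≤ 1/2) (hδ : 0 < δ) (hδε : δ < ε) :
    ∀ {n : ℕ} (B : (Fin n → X) → PMF Y), DPE B ε δ →
    ∑' x, iidPMF P n x * ∑' y, ((B x) y * Wsum P ε B x y)
      ≤ (n : ℝ≥0∞) * ENNReal.ofReal (7*δ/ε) := by
  intro n
  induction n with
  | zero =>
      intro B hB
      simp [Wsum]
  | succ n ih =>
      intro B hB
      rw [tsum_cons]
      have hsplit : ∀ a t, ∑' y, ((B (Fin.cons a t)) y * Wsum P ε B (Fin.cons a t) y)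
          = (∑' y, (sub B a t) y * w1 P ε B y)
            + ∑' y, (sub B a t) y * Wsum P ε (sub B a) t y := by
        intro a t
        rw [← ENNReal.tsum_add]
        refine tsum_congr fun y => ?_
        rw [Wsum_cons]
        simp only [sub]
        ring
      have step1 : ∑' a, ∑' t, iidPMF P (n+1) (Fin.cons a t) *
          ∑' y, ((B (Fin.cons a t)) y * Wsum P ε B (Fin.cons a t) y)
          = (∑' a, P a * ∑' y, marg P (sub B a) y * w1 P ε B y)
            + ∑' a, P a * ∑' t, iidPMF P n t *
                ∑' y, (sub B a t) y * Wsum P ε (sub B a) t y := by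
        rw [← ENNReal.tsum_add]
        refine tsum_congr fun a => ?_
        calc ∑' t, iidPMF P (n+1) (Fin.cons a t) *
            ∑' y, ((B (Fin.cons a t)) y * Wsum P ε B (Fin.cons a t) y)
            = ∑' t, P a * (iidPMF P n t * ((∑' y, (sub B a t) y * w1 P ε B y)
                + ∑' y, (sub B a t) y * Wsum P ε (sub B a) t y)) := by
              refine tsum_congr fun t => ?_
              rw [iid_cons, hsplit a t, mul_assoc]
          _ = P a * ((∑' t, iidPMF P n t * ∑' y, (sub B a t) y * w1 P ε B y)
              + ∑' t, iidPMF P n t * ∑' y, (sub B a t) y * Wsum P ε (sub B a) t y) := by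
              rw [ENNReal.tsum_mul_left]
              congr 1
              rw [← ENNReal.tsum_add]
              exact tsum_congr fun t => by rw [mul_add]
          _ = P a * ∑' y, marg P (sub B a) y * w1 P ε B y
              + P a * ∑' t, iidPMF P n t * ∑' y, (sub B a t) y * Wsum P ε (sub B a) t y := by
              rw [mul_add]
              congr 2
              rw [marg]
              exact helper1 _ _ _
      rw [step1]
      have part1 : (∑' a, P a * ∑' y, marg P (sub B a) y * w1 P ε B y)
          ≤ ENNReal.ofReal (7*δ/ε) := by
        have hswap : (∑' a, P a * ∑' y, marg P (sub B a) y * w1 P ε B y)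
            = ∑' y, marg P B y * w1 P ε B y := by
          calc ∑' a, P a * ∑' y, marg P (sub B a) y * w1 P ε B y
              = ∑' a, ∑' y, P a * (marg P (sub B a) y * w1 P ε B y) :=
                tsum_congr fun a => ENNReal.tsum_mul_left.symm
            _ = ∑' y, ∑' a, P a * (marg P (sub B a) y * w1 P ε B y) := ENNReal.tsum_comm
            _ = ∑' y, marg P B y * w1 P ε B y := by
                refine tsum_congr fun y => ?_
                rw [marg_val, ← ENNReal.tsum_mul_right]
                exact tsum_congr fun a => by ring
        rw [hswap]
        have hexp : ∑' y, marg P B y * w1 P ε B y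
            = ∑' a, P a * (pm (marg P B) (BadLo P ε B a) + pm (marg P B) (BadHi P ε B a)) := by
          calc ∑' y, marg P B y * w1 P ε B y
              = ∑' y, ∑' a, P a * (marg P B y * ((if y ∈ BadLo P ε B a then 1 else 0)
                  + (if y ∈ BadHi P ε B a then 1 else 0))) := by
                refine tsum_congr fun y => ?_
                rw [w1, ← ENNReal.tsum_mul_left]
                exact tsum_congr fun a => by ring
            _ = ∑' a, ∑' y, P a * (marg P B y * ((if y ∈ BadLo P ε B a then 1 else 0)
                  + (if y ∈ BadHi P ε B a then 1 else 0))) := ENNReal.tsum_comm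
            _ = ∑' a, P a * (pm (marg P B) (BadLo P ε B a) + pm (marg P B) (BadHi P ε B a)) := by
                refine tsum_congr fun a => ?_
                rw [ENNReal.tsum_mul_left]
                congr 1
                rw [← tsum_mul_ind (marg P B) (BadLo P ε B a),
                  ← tsum_mul_ind (marg P B) (BadHi P ε B a), ← ENNReal.tsum_add]
                exact tsum_congr fun y => by ring
        rw [hexp]
        calc ∑' a, P a * (pm (marg P B) (BadLo P ε B a) + pm (marg P B) (BadHi P ε B a))
            ≤ ENNReal.ofReal (2*δ/ε) + ENNReal.ofReal (5*δ/ε) :=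
              weighted_le _ fun a => add_le_add (mass_lo_mix P ε δ hε hε2 hδ hB a)
                (mass_hi_mix P ε δ hε hε2 hδ hδε hB a)
          _ = ENNReal.ofReal (7*δ/ε) := by
              rw [← ENNReal.ofReal_add (by positivity) (by positivity)]
              congr 1
              ring
      have part2 : (∑' a, P a * ∑' t, iidPMF P n t *
          ∑' y, (sub B a t) y * Wsum P ε (sub B a) t y)
          ≤ (n : ℝ≥0∞) * ENNReal.ofReal (7*δ/ε) := by
        calc ∑' a, P a * ∑' t, iidPMF P n t * ∑' y, (sub B a t) y * Wsum P ε (sub B a) t y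
            ≤ ∑' a, P a * ((n : ℝ≥0∞) * ENNReal.ofReal (7*δ/ε)) :=
              ENNReal.tsum_le_tsum fun a =>
                mul_le_mul_right (ih (sub B a) (dpe_sub hB a)) _
          _ = (n : ℝ≥0∞) * ENNReal.ofReal (7*δ/ε) := by
              rw [ENNReal.tsum_mul_right, PMF.tsum_coe, one_mul]
      calc (∑' a, P a * ∑' y, marg P (sub B a) y * w1 P ε B y)
            + ∑' a, P a * ∑' t, iidPMF P n t * ∑' y, (sub B a t) y * Wsum P ε (sub B a) t y
          ≤ ENNReal.ofReal (7*δ/ε) + (n : ℝ≥0∞) * ENNReal.ofReal (7*δ/ε) :=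
            add_le_add part1 part2
        _ = ((n+1 : ℕ) : ℝ≥0∞) * ENNReal.ofReal (7*δ/ε) := by
            push_cast
            ring
end Chunk7

section Chunk8
variable {D : Type}
open Classical

lemma joint_apply (p : PMF D) (A : D → PMF Y) (x : D) (y : Y) :
    jointPMF p A (x, y) = p x * (A x) y := by
  rw [jointPMF, PMF.bind_apply, ENNReal.tsum_eq_add_tsum_ite x]
  have h1 : (PMF.map (fun y' => (x, y')) (A x)) (x, y) = (A x) y := by
    rw [PMF.map_apply, ENNReal.tsum_eq_add_tsum_ite y]
    refine Eq.trans ?_ (add_zero ((A x) y))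
    congr 1
    · exact if_pos rfl
    · exact ENNReal.tsum_eq_zero.mpr fun y' => by
        split_ifs with h1 h2
        · rfl
        · exact absurd (congrArg Prod.snd h2).symm h1
        · rfl
  refine Eq.trans ?_ (add_zero (p x * (A x) y))
  congr 1
  · rw [h1]
  · exact ENNReal.tsum_eq_zero.mpr fun x' => by
      split_ifs with h
      · rfl
      · rw [PMF.map_apply]
        convert mul_zero (p x')
        exact ENNReal.tsum_eq_zero.mpr fun y' => by
          split_ifs with hc
          · exact absurd (congrArg Prod.fst hc).symm h
          · rfl

lemma joint_fst (p : PMF D) (A : D → PMF Y) : (jointPMF p A).map Prod.fst = p := by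
  rw [jointPMF, PMF.map_bind]
  have : ∀ x : D, PMF.map Prod.fst (PMF.map (fun y => (x, y)) (A x)) = PMF.pure x := by
    intro x
    rw [PMF.map_comp]
    show PMF.map (Function.const Y x) (A x) = PMF.pure x
    rw [PMF.map_const]
  calc p.bind (fun x => PMF.map Prod.fst (PMF.map (fun y => (x, y)) (A x)))
      = p.bind (fun x => PMF.pure x) := by
        congr 1
        funext x
        exact this x
    _ = p := PMF.bind_pure p

lemma joint_snd (p : PMF D) (A : D → PMF Y) : (jointPMF p A).map Prod.snd = p.bind A := by
  rw [jointPMF, PMF.map_bind]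
  congr 1
  funext x
  rw [PMF.map_comp]
  show PMF.map id (A x) = A x
  rw [PMF.map_id]

lemma indep_eq_joint (p : PMF D) (q : PMF Y) : indepPair p q = jointPMF p (fun _ => q) := rfl

lemma joint_pm (p : PMF D) (A : D → PMF Y) (O : Set (D × Y)) :
    pm (jointPMF p A) O = ∑' x, p x * ∑' y, (if (x,y) ∈ O then (A x) y else 0) := by
  show (jointPMF p A).toOuterMeasure O = _
  rw [PMF.toOuterMeasure_apply]
  have heta : ∑' z : D × Y, O.indicator (⇑(jointPMF p A)) z
      = ∑' z : D × Y, (fun a b => O.indicator (⇑(jointPMF p A)) (a, b)) z.1 z.2 :=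
    tsum_congr fun z => rfl
  rw [heta, ENNReal.tsum_prod (f := fun a b => O.indicator (⇑(jointPMF p A)) (a, b))]
  refine tsum_congr fun x => ?_
  rw [← ENNReal.tsum_mul_left]
  refine tsum_congr fun y => ?_
  by_cases h : (x,y) ∈ O
  · rw [Set.indicator_of_mem h, joint_apply, if_pos h]
  · rw [Set.indicator_of_notMem h, if_neg h, mul_zero]

lemma indep_pm (p : PMF D) (q : PMF Y) (O : Set (D × Y)) :
    pm (indepPair p q) O = ∑' x, p x * ∑' y, (if (x,y) ∈ O then q y else 0) := by
  rw [indep_eq_joint, joint_pm]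

end Chunk8

section Chunk9
open Classical
variable {D : Type}

lemma S1bound (p : PMF D) (A : D → PMF Y) (q : PMF Y) (T' : ℝ≥0∞) (O : Set (D × Y)) :
    ∑' x, p x * ∑' y, ((if (x,y) ∈ O then (1:ℝ≥0∞) else 0)
        * ((if (A x) y ≤ T' * q y then 1 else 0) * (A x) y))
      ≤ T' * pm (indepPair p q) O := by
  rw [indep_pm, ← ENNReal.tsum_mul_left]
  refine ENNReal.tsum_le_tsum fun x => ?_
  rw [← mul_assoc, mul_comm T' (p x), mul_assoc]
  refine mul_le_mul_right ?_ _
  rw [← ENNReal.tsum_mul_left]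
  refine ENNReal.tsum_le_tsum fun y => ?_
  by_cases hO : (x,y) ∈ O
  · rw [if_pos hO, if_pos hO, one_mul]
    by_cases hs : (A x) y ≤ T' * q y
    · rw [if_pos hs, one_mul]; exact hs
    · rw [if_neg hs, zero_mul]; exact zero_le
  · rw [if_neg hO, if_neg hO, zero_mul, mul_zero]

lemma S3bound (p : PMF D) (A : D → PMF Y) (Wf : D → Y → ℝ≥0∞) (θ' : ℝ≥0∞)
    (hθ'0 : θ' ≠ 0) (hθ't : θ' ≠ ⊤) :
    ∑' x, p x * ∑' y, ((A x) y * (if θ' < Wf x y then 1 else 0))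
      ≤ θ'⁻¹ * ∑' x, p x * ∑' y, ((A x) y * Wf x y) := by
  rw [← ENNReal.tsum_mul_left]
  refine ENNReal.tsum_le_tsum fun x => ?_
  rw [← mul_assoc, mul_comm θ'⁻¹ (p x), mul_assoc]
  refine mul_le_mul_right ?_ _
  rw [← ENNReal.tsum_mul_left]
  refine ENNReal.tsum_le_tsum fun y => ?_
  by_cases h : θ' < Wf x y
  · rw [if_pos h, mul_one]
    have h1 : (1:ℝ≥0∞) ≤ θ'⁻¹ * Wf x y := by
      calc (1:ℝ≥0∞) = θ'⁻¹ * θ' := (ENNReal.inv_mul_cancel hθ'0 hθ't).symm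
        _ ≤ θ'⁻¹ * Wf x y := mul_le_mul_right h.le _
    calc (A x) y = (A x) y * 1 := (mul_one _).symm
      _ ≤ (A x) y * (θ'⁻¹ * Wf x y) := mul_le_mul_right h1 _
      _ = θ'⁻¹ * ((A x) y * Wf x y) := by ring
  · rw [if_neg h, mul_zero]
    exact zero_le

lemma inv_mul_sq_le {a : ℝ≥0∞} (ha : a ≤ 1) : a⁻¹ * a^2 ≤ a := by
  by_cases h0 : a = 0
  · simp [h0]
  · rw [sq, ← mul_assoc, ENNReal.inv_mul_cancel h0 (ne_top_of_le_ne_top one_ne_top ha), one_mul]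

lemma S4bound (P : PMF X) {ε δ : ℝ} {n : ℕ} (A : (Fin n → X) → PMF Y)
    (hε : 0 < ε) (hε2 : ε ≤ 1/2) (hA : DPE A ε δ) (θ T : ℝ) (hθ : 0 ≤ θ) (hT : 0 < T) :
    ∑' x, iidPMF P n x * ∑' y, (GoodI P ε A x y *
        ((if Wsum P ε A x y ≤ ENNReal.ofReal θ then 1 else 0) *
         ((if ENNReal.ofReal T * marg P A y < (A x) y then 1 else 0) * (A x) y)))
      ≤ ENNReal.ofReal (Real.exp θ) * (ENNReal.ofReal T)⁻¹
          * (ENNReal.ofReal (1+30*ε^2))^n := by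
  set ν := marg P A with hν
  have key : ∀ (x : Fin n → X) (y : Y), iidPMF P n x * (GoodI P ε A x y *
      ((if Wsum P ε A x y ≤ ENNReal.ofReal θ then 1 else 0) *
       ((if ENNReal.ofReal T * ν y < (A x) y then 1 else 0) * (A x) y)))
      ≤ ENNReal.ofReal (Real.exp θ) * (ENNReal.ofReal T)⁻¹
          * ((ν y)⁻¹ * (iidPMF P n x * (GoodI P ε A x y * (Pen P ε A x y * ((A x) y)^2)))) := by
    intro x y
    by_cases hbig : ENNReal.ofReal T * ν y < (A x) y
    swap
    · rw [if_neg hbig]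
      simp
    by_cases hW : Wsum P ε A x y ≤ ENNReal.ofReal θ
    swap
    · rw [if_neg hW]
      simp
    rw [if_pos hbig, if_pos hW]
    by_cases hz : iidPMF P n x * (A x) y = 0
    · rcases mul_eq_zero.mp hz with h | h
      · rw [h]; simp
      · rw [h]; simp
    have hν0 : ν y ≠ 0 := by
      intro hc
      apply hz
      refine le_antisymm ?_ (zero_le)
      calc iidPMF P n x * (A x) y ≤ ∑' x', iidPMF P n x' * (A x') y := ENNReal.le_tsum x
        _ = ν y := (marg_apply P A y).symm
        _ = 0 := hc
    have hν1 : ν y ≤ 1 := PMF.coe_le_one _ _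
    have hνt : ν y ≠ ⊤ := ne_top_of_le_ne_top one_ne_top hν1
    have hT0 : (ENNReal.ofReal T) ≠ 0 := by
      simp [ENNReal.ofReal_pos.mpr hT]
      exact hT
    have hTt : (ENNReal.ofReal T) ≠ ⊤ := ENNReal.ofReal_ne_top
    have hTν0 : ENNReal.ofReal T * ν y ≠ 0 := mul_ne_zero hT0 hν0
    have hTνt : ENNReal.ofReal T * ν y ≠ ⊤ := ENNReal.mul_ne_top hTt hνt
    have hfac1 : (1:ℝ≥0∞) ≤ (ENNReal.ofReal T * ν y)⁻¹ * (A x) y := by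
      calc (1:ℝ≥0∞) = (ENNReal.ofReal T * ν y)⁻¹ * (ENNReal.ofReal T * ν y) :=
            (ENNReal.inv_mul_cancel hTν0 hTνt).symm
        _ ≤ (ENNReal.ofReal T * ν y)⁻¹ * (A x) y := mul_le_mul_right hbig.le _
    have hfac2 : (1:ℝ≥0∞) ≤ ENNReal.ofReal (Real.exp θ) * Pen P ε A x y := by
      have h1 := penExp P ε A x y
      have h2 : ENNReal.ofReal (Real.exp ((Wsum P ε A x y).toReal))
          ≤ ENNReal.ofReal (Real.exp θ) := by
        refine ENNReal.ofReal_le_ofReal (Real.exp_le_exp.mpr ?_)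
        exact ENNReal.toReal_le_of_le_ofReal hθ hW
      exact h1.trans (mul_le_mul_left h2 _)
    calc iidPMF P n x * (GoodI P ε A x y * (1 * (1 * (A x) y)))
        = (iidPMF P n x * (GoodI P ε A x y * (A x) y)) * 1 * 1 := by ring
      _ ≤ (iidPMF P n x * (GoodI P ε A x y * (A x) y))
            * ((ENNReal.ofReal T * ν y)⁻¹ * (A x) y)
            * (ENNReal.ofReal (Real.exp θ) * Pen P ε A x y) := by
          exact mul_le_mul' (mul_le_mul_right hfac1 _) hfac2
      _ = ENNReal.ofReal (Real.exp θ) * (ENNReal.ofReal T)⁻¹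
            * ((ν y)⁻¹ * (iidPMF P n x * (GoodI P ε A x y * (Pen P ε A x y * ((A x) y)^2)))) := by
          rw [ENNReal.mul_inv (Or.inl hT0) (Or.inl hTt)]
          ring
  calc ∑' x, iidPMF P n x * ∑' y, (GoodI P ε A x y *
        ((if Wsum P ε A x y ≤ ENNReal.ofReal θ then 1 else 0) *
         ((if ENNReal.ofReal T * ν y < (A x) y then 1 else 0) * (A x) y)))
      = ∑' y, ∑' x, iidPMF P n x * (GoodI P ε A x y *
          ((if Wsum P ε A x y ≤ ENNReal.ofReal θ then 1 else 0) *
           ((if ENNReal.ofReal T * ν y < (A x) y then 1 else 0) * (A x) y))) := by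
        rw [← ENNReal.tsum_comm]
        exact tsum_congr fun x => ENNReal.tsum_mul_left.symm
    _ ≤ ∑' y, ∑' x, ENNReal.ofReal (Real.exp θ) * (ENNReal.ofReal T)⁻¹
          * ((ν y)⁻¹ * (iidPMF P n x * (GoodI P ε A x y * (Pen P ε A x y * ((A x) y)^2)))) :=
        ENNReal.tsum_le_tsum fun y => ENNReal.tsum_le_tsum fun x => key x y
    _ = ∑' y, ENNReal.ofReal (Real.exp θ) * (ENNReal.ofReal T)⁻¹ * ((ν y)⁻¹
          * ∑' x, iidPMF P n x * (GoodI P ε A x y * (Pen P ε A x y * ((A x) y)^2))) := by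
        refine tsum_congr fun y => ?_
        rw [ENNReal.tsum_mul_left, ENNReal.tsum_mul_left]
    _ ≤ ∑' y, ENNReal.ofReal (Real.exp θ) * (ENNReal.ofReal T)⁻¹
          * ((ν y)⁻¹ * ((ENNReal.ofReal (1+30*ε^2))^n * (ν y)^2)) := by
        refine ENNReal.tsum_le_tsum fun y => ?_
        refine mul_le_mul_right (mul_le_mul_right ?_ _) _
        exact sm_main P hε hε2 A hA y
    _ ≤ ∑' y, ENNReal.ofReal (Real.exp θ) * (ENNReal.ofReal T)⁻¹
          * ((ENNReal.ofReal (1+30*ε^2))^n * ν y) := by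
        refine ENNReal.tsum_le_tsum fun y => ?_
        refine mul_le_mul_right ?_ _
        calc (ν y)⁻¹ * ((ENNReal.ofReal (1+30*ε^2))^n * (ν y)^2)
            = (ENNReal.ofReal (1+30*ε^2))^n * ((ν y)⁻¹ * (ν y)^2) := by ring
          _ ≤ (ENNReal.ofReal (1+30*ε^2))^n * ν y :=
              mul_le_mul_right (inv_mul_sq_le (PMF.coe_le_one _ _)) _
    _ = ENNReal.ofReal (Real.exp θ) * (ENNReal.ofReal T)⁻¹
          * (ENNReal.ofReal (1+30*ε^2))^n := by
        rw [ENNReal.tsum_mul_left]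
        congr 1
        rw [ENNReal.tsum_mul_left, PMF.tsum_coe, mul_one]
end Chunk9

section Chunk10
open Classical

lemma main_bound (P : PMF X) {ε δ : ℝ} {n : ℕ} (A : (Fin n → X) → PMF Y)
    (hn : 1 ≤ n) (hε : 0 < ε) (hε2 : ε ≤ 1/2) (hδ : 0 < δ) (hδε : δ < ε)
    (hA : DPE A ε δ) (O : Set ((Fin n → X) × Y)) :
    pm (jointPMF (iidPMF P n) A) O
      ≤ ENNReal.ofReal (Real.exp (31*ε^2*(n:ℝ) + 2*((n:ℝ)*Real.sqrt (δ/ε))))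
          * pm (indepPair (iidPMF P n) (marg P A)) O
        + ENNReal.ofReal (Real.exp (-(ε^2*(n:ℝ))) + 14*((n:ℝ)*Real.sqrt (δ/ε))) := by
  have hr0 : 0 < Real.sqrt (δ/ε) := Real.sqrt_pos.mpr (div_pos hδ hε)
  have hrsq : Real.sqrt (δ/ε) ^ 2 = δ/ε := Real.sq_sqrt (div_pos hδ hε).le
  have hr1 : Real.sqrt (δ/ε) ≤ 1 := by
    nlinarith [hrsq, hr0, (div_lt_one hε).mpr hδε]
  have hn0 : (0:ℝ) < (n:ℝ) := by exact_mod_cast hn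
  set r := Real.sqrt (δ/ε) with hrdef
  set θ : ℝ := (n:ℝ) * r with hθdef
  have hθ0 : 0 < θ := mul_pos hn0 hr0
  set T : ℝ := Real.exp (31*ε^2*(n:ℝ) + 2*θ) with hTdef
  have hT0 : 0 < T := Real.exp_pos _
  set T' := ENNReal.ofReal T with hT'def
  set θ' := ENNReal.ofReal θ with hθ'def
  have hθ'0 : θ' ≠ 0 := by
    rw [hθ'def]
    simp only [ne_eq, ENNReal.ofReal_eq_zero, not_le]
    exact hθ0
  have hθ't : θ' ≠ ⊤ := ENNReal.ofReal_ne_top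
  set p := iidPMF P n with hpdef
  set ν := marg P A with hνdef
  -- the pointwise master inequality
  have master : ∀ (x : Fin n → X) (y : Y),
      (if (x,y) ∈ O then (A x) y else 0)
        ≤ (if (x,y) ∈ O then (1:ℝ≥0∞) else 0) * ((if (A x) y ≤ T' * ν y then 1 else 0) * (A x) y)
          + (A x) y * NotGoodI P ε A x y
          + (A x) y * (if θ' < Wsum P ε A x y then 1 else 0)
          + GoodI P ε A x y * ((if Wsum P ε A x y ≤ θ' then 1 else 0)
              * ((if T' * ν y < (A x) y then 1 else 0) * (A x) y)) := by
    intro x y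
    by_cases hO : (x,y) ∈ O
    swap
    · rw [if_neg hO, if_neg hO]
      exact zero_le
    rw [if_pos hO, if_pos hO, one_mul]
    by_cases hsmall : (A x) y ≤ T' * ν y
    · rw [if_pos hsmall, one_mul]
      exact le_add_right (le_add_right (le_add_right le_rfl))
    · rw [if_neg hsmall, zero_mul, zero_add, if_pos (not_le.mp hsmall)]
      have hGN := good_add_notgood P ε A x y
      by_cases hW : Wsum P ε A x y ≤ θ'
      · rw [if_pos hW, if_neg (not_lt.mpr hW), mul_zero, add_zero]
        calc (A x) y = (A x) y * (GoodI P ε A x y + NotGoodI P ε A x y) := by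
              rw [hGN, mul_one]
          _ = (A x) y * NotGoodI P ε A x y + GoodI P ε A x y * (1 * (1 * (A x) y)) := by
              ring
          _ ≤ _ := le_rfl
      · rw [if_neg hW, if_pos (not_le.mp hW), mul_one]
        exact le_add_right (le_add_left le_rfl)
  rw [show pm (jointPMF p A) O
      = ∑' x, p x * ∑' y, (if (x,y) ∈ O then (A x) y else 0) from joint_pm p A O]
  have split4 : ∑' x, p x * ∑' y, (if (x,y) ∈ O then (A x) y else 0)
      ≤ (∑' x, p x * ∑' y, ((if (x,y) ∈ O then (1:ℝ≥0∞) else 0)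
            * ((if (A x) y ≤ T' * ν y then 1 else 0) * (A x) y)))
        + ((∑' x, p x * ∑' y, ((A x) y * NotGoodI P ε A x y))
        + ((∑' x, p x * ∑' y, ((A x) y * (if θ' < Wsum P ε A x y then 1 else 0)))
        + (∑' x, p x * ∑' y, (GoodI P ε A x y * ((if Wsum P ε A x y ≤ θ' then 1 else 0)
            * ((if T' * ν y < (A x) y then 1 else 0) * (A x) y)))))) := by
    calc ∑' x, p x * ∑' y, (if (x,y) ∈ O then (A x) y else 0)
        ≤ ∑' x, p x * ∑' y,
            ((if (x,y) ∈ O then (1:ℝ≥0∞) else 0)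
              * ((if (A x) y ≤ T' * ν y then 1 else 0) * (A x) y)
            + (A x) y * NotGoodI P ε A x y
            + (A x) y * (if θ' < Wsum P ε A x y then 1 else 0)
            + GoodI P ε A x y * ((if Wsum P ε A x y ≤ θ' then 1 else 0)
                * ((if T' * ν y < (A x) y then 1 else 0) * (A x) y))) :=
          ENNReal.tsum_le_tsum fun x =>
            mul_le_mul_right (ENNReal.tsum_le_tsum fun y => master x y) _
      _ = ∑' x, (p x * ∑' y, ((if (x,y) ∈ O then (1:ℝ≥0∞) else 0)
              * ((if (A x) y ≤ T' * ν y then 1 else 0) * (A x) y))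
            + (p x * ∑' y, ((A x) y * NotGoodI P ε A x y)
            + (p x * ∑' y, ((A x) y * (if θ' < Wsum P ε A x y then 1 else 0))
            + p x * ∑' y, (GoodI P ε A x y * ((if Wsum P ε A x y ≤ θ' then 1 else 0)
                * ((if T' * ν y < (A x) y then 1 else 0) * (A x) y)))))) := by
          refine tsum_congr fun x => ?_
          rw [ENNReal.tsum_add, ENNReal.tsum_add, ENNReal.tsum_add]
          ring
      _ = _ := by rw [ENNReal.tsum_add, ENNReal.tsum_add, ENNReal.tsum_add]
  refine split4.trans ?_
  have hB1 := S1bound p A ν T' O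
  have hnat : ((n : ℝ≥0∞)) * ENNReal.ofReal (7*δ/ε) = ENNReal.ofReal ((n:ℝ) * (7*δ/ε)) := by
    rw [← ENNReal.ofReal_natCast n, ← ENNReal.ofReal_mul (Nat.cast_nonneg n)]
  have hn1 : (1:ℝ) ≤ (n:ℝ) := by exact_mod_cast hn
  have hreal2 : (n:ℝ) * (7*δ/ε) ≤ 7*θ := by
    have hde : (7:ℝ)*δ/ε = 7*r^2 := by rw [hrsq]; ring
    rw [hde, hθdef]
    nlinarith [mul_nonneg (mul_nonneg hn0.le hr0.le) (sub_nonneg.mpr hr1)]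
  have hB2 : (∑' x, p x * ∑' y, ((A x) y * NotGoodI P ε A x y))
      ≤ ENNReal.ofReal (7*θ) := by
    calc (∑' x, p x * ∑' y, ((A x) y * NotGoodI P ε A x y))
        ≤ (n : ℝ≥0∞) * ENNReal.ofReal (7*δ/ε) := notgood_mass P hε hε2 hδ hδε A hA
      _ = ENNReal.ofReal ((n:ℝ) * (7*δ/ε)) := hnat
      _ ≤ ENNReal.ofReal (7*θ) := ENNReal.ofReal_le_ofReal hreal2
  have hB3 : (∑' x, p x * ∑' y, ((A x) y * (if θ' < Wsum P ε A x y then 1 else 0)))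
      ≤ ENNReal.ofReal (7*θ) := by
    calc (∑' x, p x * ∑' y, ((A x) y * (if θ' < Wsum P ε A x y then 1 else 0)))
        ≤ θ'⁻¹ * ∑' x, p x * ∑' y, ((A x) y * Wsum P ε A x y) :=
          S3bound p A (Wsum P ε A) θ' hθ'0 hθ't
      _ ≤ θ'⁻¹ * ((n : ℝ≥0∞) * ENNReal.ofReal (7*δ/ε)) :=
          mul_le_mul_right (wsum_exp P hε hε2 hδ hδε A hA) _
      _ = ENNReal.ofReal (θ⁻¹ * ((n:ℝ) * (7*δ/ε))) := by
          rw [hnat, hθ'def, ← ENNReal.ofReal_inv_of_pos hθ0,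
            ← ENNReal.ofReal_mul (by positivity)]
      _ ≤ ENNReal.ofReal (7*θ) := by
          refine ENNReal.ofReal_le_ofReal ?_
          have h7 : θ⁻¹ * ((n:ℝ) * (7*δ/ε)) ≤ θ⁻¹ * (7*θ*θ) := by
            refine mul_le_mul_of_nonneg_left ?_ (inv_nonneg.mpr hθ0.le)
            have hde : (7:ℝ)*δ/ε = 7*r^2 := by rw [hrsq]; ring
            rw [hde, hθdef]
            nlinarith [mul_nonneg (mul_nonneg hn0.le (sq_nonneg r)) (sub_nonneg.mpr hn1)]
          have h8 : θ⁻¹ * (7*θ*θ) = 7*θ := by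
            field_simp
          exact h7.trans (le_of_eq h8)
  have hB4 : (∑' x, p x * ∑' y, (GoodI P ε A x y * ((if Wsum P ε A x y ≤ θ' then 1 else 0)
        * ((if T' * ν y < (A x) y then 1 else 0) * (A x) y))))
      ≤ ENNReal.ofReal (Real.exp (-(ε^2*(n:ℝ)))) := by
    refine (S4bound P A hε hε2 hA θ T hθ0.le hT0).trans ?_
    have h1 : (ENNReal.ofReal T)⁻¹
        = ENNReal.ofReal (Real.exp (-(31*ε^2*(n:ℝ) + 2*θ))) := by
      rw [Real.exp_neg, ← ENNReal.ofReal_inv_of_pos hT0]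
    have h2 : (ENNReal.ofReal (1+30*ε^2))^n = ENNReal.ofReal ((1+30*ε^2)^n) :=
      (ENNReal.ofReal_pow (by positivity) n).symm
    rw [h1, h2, ← ENNReal.ofReal_mul (Real.exp_nonneg _),
      ← ENNReal.ofReal_mul (by positivity)]
    refine ENNReal.ofReal_le_ofReal ?_
    have h3 : (1+30*ε^2)^n ≤ Real.exp (30*ε^2*(n:ℝ)) := by
      calc (1+30*ε^2)^n ≤ (Real.exp (30*ε^2))^n :=
            pow_le_pow_left₀ (by positivity) (by linarith [Real.add_one_le_exp (30*ε^2)]) n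
        _ = Real.exp (30*ε^2*(n:ℝ)) := by
            rw [← Real.exp_nat_mul]
            congr 1
            ring
    calc Real.exp θ * Real.exp (-(31*ε^2*(n:ℝ) + 2*θ)) * (1+30*ε^2)^n
        ≤ Real.exp θ * Real.exp (-(31*ε^2*(n:ℝ) + 2*θ)) * Real.exp (30*ε^2*(n:ℝ)) := by
          refine mul_le_mul_of_nonneg_left h3 (by positivity)
      _ = Real.exp (-(ε^2*(n:ℝ)) - θ) := by
          rw [← Real.exp_add, ← Real.exp_add]
          congr 1
          ring
      _ ≤ Real.exp (-(ε^2*(n:ℝ))) := Real.exp_le_exp.mpr (by linarith)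
  calc (∑' x, p x * ∑' y, ((if (x,y) ∈ O then (1:ℝ≥0∞) else 0)
            * ((if (A x) y ≤ T' * ν y then 1 else 0) * (A x) y)))
        + ((∑' x, p x * ∑' y, ((A x) y * NotGoodI P ε A x y))
        + ((∑' x, p x * ∑' y, ((A x) y * (if θ' < Wsum P ε A x y then 1 else 0)))
        + (∑' x, p x * ∑' y, (GoodI P ε A x y * ((if Wsum P ε A x y ≤ θ' then 1 else 0)
            * ((if T' * ν y < (A x) y then 1 else 0) * (A x) y))))))
      ≤ T' * pm (indepPair p ν) O + (ENNReal.ofReal (7*θ)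
          + (ENNReal.ofReal (7*θ) + ENNReal.ofReal (Real.exp (-(ε^2*(n:ℝ)))))) :=
        add_le_add hB1 (add_le_add hB2 (add_le_add hB3 hB4))
    _ = T' * pm (indepPair p ν) O
        + ENNReal.ofReal (Real.exp (-(ε^2*(n:ℝ))) + 14*θ) := by
        congr 1
        rw [← ENNReal.ofReal_add (by positivity) (Real.exp_nonneg _),
          ← ENNReal.ofReal_add (by positivity) (by positivity)]
        congr 1
        ring
end Chunk10
end Stmt5Aux

/-- **Main Theorem.**  There exist absolute constants `C, C' > 0` such that: for
every countable data domain `X` and every `(ε,δ)`-differentially private algorithm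
`A : X^n → Y` with `ε ∈ (0,1/2]` and `δ ∈ (0,ε)`, the `β`-approximate max-information of `A`
over product distributions satisfies `I^β_{∞,P}(A, n) ≤ C·(ε²·n + n·√(δ/ε))` for
`β = e^{-ε²n} + C'·n·√(δ/ε)`. -/
theorem stmt_5 : ∃ C C' : ℝ, 0 < C ∧ 0 < C' ∧
    ∀ (X Y : Type) [Countable X] (n : ℕ) (A : (Fin n → X) → PMF Y) (ε δ : ℝ),
      0 < ε → ε ≤ 1 / 2 → 0 < δ → δ < ε → DiffPrivate A ε δ →
      ∀ P : PMF X,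
        MaxInfoLe (jointPMF (iidPMF P n) A)
          (Real.exp (-(ε ^ 2 * n)) + C' * n * Real.sqrt (δ / ε))
          (C * (ε ^ 2 * n + n * Real.sqrt (δ / ε))) := by
  refine ⟨45, 14, by norm_num, by norm_num, ?_⟩
  intro X Y _ n A ε δ hε hε2 hδ hδε hDP P
  intro O hO
  rcases Nat.eq_zero_or_pos n with hn0 | hn
  · exfalso
    subst hn0
    have hle : prob (jointPMF (iidPMF P 0) A) O ≤ 1 := by
      have h1 := Stmt5Aux.pm_le_one (jointPMF (iidPMF P 0) A) O
      rw [prob]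
      calc (Stmt5Aux.pm (jointPMF (iidPMF P 0) A) O).toReal
          ≤ (1:ℝ≥0∞).toReal := ENNReal.toReal_mono ENNReal.one_ne_top h1
        _ = 1 := ENNReal.toReal_one
    simp only [Nat.cast_zero, mul_zero, neg_zero, Real.exp_zero, zero_mul, add_zero] at hO
    linarith
  · have hn1 : 1 ≤ n := hn
    have hA' : Stmt5Aux.DPE A ε δ := Stmt5Aux.dpe_of_dp hδ.le hDP
    have hmb := Stmt5Aux.main_bound P A hn1 hε hε2 hδ hδε hA' O
    rw [Stmt5Aux.joint_fst, Stmt5Aux.joint_snd]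
    have hmb' : Stmt5Aux.pm (jointPMF (iidPMF P n) A) O
        ≤ ENNReal.ofReal (Real.exp (31*ε^2*(n:ℝ) + 2*((n:ℝ)*Real.sqrt (δ/ε))))
            * Stmt5Aux.pm (indepPair (iidPMF P n) ((iidPMF P n).bind A)) O
          + ENNReal.ofReal (Real.exp (-(ε^2*(n:ℝ))) + 14*((n:ℝ)*Real.sqrt (δ/ε))) := hmb
    set r := Real.sqrt (δ/ε) with hrdef
    have hr0 : 0 ≤ r := Real.sqrt_nonneg _
    set T := Real.exp (31*ε^2*(n:ℝ) + 2*((n:ℝ)*r)) with hTdef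
    set β := Real.exp (-(ε^2*(n:ℝ))) + 14*((n:ℝ)*r) with hβdef
    have hβ0 : 0 ≤ β := by positivity
    have hfin : ENNReal.ofReal T
        * Stmt5Aux.pm (indepPair (iidPMF P n) ((iidPMF P n).bind A)) O ≠ ⊤ :=
      ENNReal.mul_ne_top ENNReal.ofReal_ne_top (Stmt5Aux.pm_ne_top _ _)
    have hreal : prob (jointPMF (iidPMF P n) A) O
        ≤ T * prob (indepPair (iidPMF P n) ((iidPMF P n).bind A)) O + β := by
      rw [prob, prob]
      calc (Stmt5Aux.pm (jointPMF (iidPMF P n) A) O).toReal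
          ≤ (ENNReal.ofReal T
              * Stmt5Aux.pm (indepPair (iidPMF P n) ((iidPMF P n).bind A)) O
              + ENNReal.ofReal β).toReal :=
            ENNReal.toReal_mono
              (ENNReal.add_ne_top.mpr ⟨hfin, ENNReal.ofReal_ne_top⟩) hmb'
        _ = T * (Stmt5Aux.pm (indepPair (iidPMF P n) ((iidPMF P n).bind A)) O).toReal + β := by
            rw [ENNReal.toReal_add hfin ENNReal.ofReal_ne_top, ENNReal.toReal_mul,
              ENNReal.toReal_ofReal (Real.exp_nonneg _), ENNReal.toReal_ofReal hβ0]
    have hT2k : T ≤ (2:ℝ) ^ (45*(ε^2*(n:ℝ) + (n:ℝ)*r)) := by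
      rw [Real.rpow_def_of_pos two_pos]
      rw [hTdef]
      refine Real.exp_le_exp.mpr ?_
      have hlog := Real.log_two_gt_d9
      have ha : 0 ≤ ε^2*(n:ℝ) := by positivity
      have hb : 0 ≤ (n:ℝ)*r := by positivity
      nlinarith
    have hpnn := Stmt5Aux.prob_nonneg (indepPair (iidPMF P n) ((iidPMF P n).bind A)) O
    have h2k0 : (0:ℝ) ≤ (2:ℝ) ^ (45*(ε^2*(n:ℝ) + (n:ℝ)*r)) := by positivity
    calc prob (jointPMF (iidPMF P n) A) O - (Real.exp (-(ε ^ 2 * n)) + 14 * n * r)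
        ≤ T * prob (indepPair (iidPMF P n) ((iidPMF P n).bind A)) O := by
          have : Real.exp (-(ε ^ 2 * (n:ℝ))) + 14 * (n:ℝ) * r = β := by
            rw [hβdef]; ring
          linarith [hreal]
      _ ≤ (2:ℝ) ^ (45*(ε^2*(n:ℝ) + (n:ℝ)*r))
            * prob (indepPair (iidPMF P n) ((iidPMF P n).bind A)) O :=
          mul_le_mul_of_nonneg_right hT2k hpnn
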